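/- Let 0 < K₋ < K₊, γ ≥ 0, and let Ē* : [K₋, K₊] → (0, ∞) be differentiable with |K (d/dK) log Ē*(K) + 5/3| ≤ γ for all K in [K₋, K₊]. Set Re = (K₊/K₋)^(4/3), fix ε̄ > 0, and define α(K) = Ē*(K) / (ε̄^(2/3) K^(−5/3)). Then for all K, K' ∈ [K₋, K₊]: Re^(−3γ/4) ≤ α(K)/α(K') ≤ Re^(3γ/4). -/

import Mathlib

open Set

/-- The `5/3` law: the spectral precision `γ` bounds the oscillation of the compensated
spectrum `α(K) = Ē*(K)/(ε̄^(2/3) K^(−5/3))` on the inertial range, in terms of the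
Reynolds number `Re = (K₊/K₋)^(4/3)`. -/
theorem kolmogorov_constant_oscillation (Kminus Kplus γ εbar : ℝ) (hK : 0 < Kminus)
    (hKK : Kminus < Kplus) (hγ : 0 ≤ γ) (hε : 0 < εbar) (E : ℝ → ℝ)
    (hEpos : ∀ K ∈ Icc Kminus Kplus, 0 < E K)
    (hdiff : ∀ K ∈ Icc Kminus Kplus, DifferentiableAt ℝ E K)
    (hbound : ∀ K ∈ Icc Kminus Kplus, |K * deriv (fun x => Real.log (E x)) K + 5 / 3| ≤ γ) :
    let Re := (Kplus / Kminus) ^ ((4 : ℝ) / 3)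
    let α : ℝ → ℝ := fun K => E K / (εbar ^ ((2 : ℝ) / 3) * K ^ (-(5 : ℝ) / 3))
    ∀ K ∈ Icc Kminus Kplus, ∀ K' ∈ Icc Kminus Kplus,
      Re ^ (-(3 * γ) / 4) ≤ α K / α K' ∧ α K / α K' ≤ Re ^ (3 * γ / 4) := by
  intro Re α
  have hKpos : ∀ a ∈ Icc Kminus Kplus, 0 < a := fun a ha => lt_of_lt_of_le hK ha.1
  have hr : (0:ℝ) < Kplus / Kminus := div_pos (hK.trans hKK) hK
  -- continuity / differentiability of auxiliary functions
  have hdlog : ∀ x ∈ Icc Kminus Kplus,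
      DifferentiableAt ℝ (fun y => Real.log (E y)) x := fun x hx =>
    (hdiff x hx).log (hEpos x hx).ne'
  have hcont : ∀ c : ℝ, ContinuousOn (fun x => Real.log (E x) + c * Real.log x)
      (Icc Kminus Kplus) := by
    intro c x hx
    exact ((hdlog x hx).continuousAt.add
      (((Real.differentiableAt_log (hKpos x hx).ne').const_mul c).continuousAt)).continuousWithinAt
  have hdiffOn : ∀ c : ℝ, DifferentiableOn ℝ (fun x => Real.log (E x) + c * Real.log x)
      (interior (Icc Kminus Kplus)) := by
    intro c x hx
    rw [interior_Icc] at hx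
    have hx' : x ∈ Icc Kminus Kplus := Ioo_subset_Icc_self hx
    exact ((hdlog x hx').add
      ((Real.differentiableAt_log (hKpos x hx').ne').const_mul c)).differentiableWithinAt
  have hderiv : ∀ c : ℝ, ∀ x ∈ Icc Kminus Kplus,
      deriv (fun y => Real.log (E y) + c * Real.log y) x
        = deriv (fun y => Real.log (E y)) x + c * x⁻¹ := by
    intro c x hx
    rw [deriv_fun_add (hdlog x hx)
      ((Real.differentiableAt_log (hKpos x hx).ne').const_mul c),
      deriv_const_mul _ (Real.differentiableAt_log (hKpos x hx).ne'), Real.deriv_log]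
  -- monotone / antitone compensated logs
  have monoU : MonotoneOn (fun x => Real.log (E x) + (5/3 + γ) * Real.log x)
      (Icc Kminus Kplus) := by
    apply monotoneOn_of_deriv_nonneg (convex_Icc _ _) (hcont _) (hdiffOn _)
    intro x hx
    rw [interior_Icc] at hx
    have hx' : x ∈ Icc Kminus Kplus := Ioo_subset_Icc_self hx
    have hx0 : 0 < x := hKpos x hx'
    rw [hderiv _ x hx']
    set d := deriv (fun y => Real.log (E y)) x with hd
    have h1 := (abs_le.1 (hbound x hx')).1
    have h2 : 0 ≤ x * d + (5/3 + γ) := by linarith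
    have : d + (5/3 + γ) * x⁻¹ = (x * d + (5/3 + γ)) / x := by
      field_simp
    rw [this]
    exact div_nonneg h2 hx0.le
  have monoV : AntitoneOn (fun x => Real.log (E x) + (5/3 - γ) * Real.log x)
      (Icc Kminus Kplus) := by
    apply antitoneOn_of_deriv_nonpos (convex_Icc _ _) (hcont _) (hdiffOn _)
    intro x hx
    rw [interior_Icc] at hx
    have hx' : x ∈ Icc Kminus Kplus := Ioo_subset_Icc_self hx
    have hx0 : 0 < x := hKpos x hx'
    rw [hderiv _ x hx']
    set d := deriv (fun y => Real.log (E y)) x with hd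
    have h1 := (abs_le.1 (hbound x hx')).2
    have h2 : x * d + (5/3 - γ) ≤ 0 := by linarith
    have : d + (5/3 - γ) * x⁻¹ = (x * d + (5/3 - γ)) / x := by
      field_simp
    rw [this]
    exact div_nonpos_of_nonpos_of_nonneg h2 hx0.le
  -- positivity of α and its logarithm
  have hαpos : ∀ a ∈ Icc Kminus Kplus, 0 < α a := by
    intro a ha
    exact div_pos (hEpos a ha)
      (mul_pos (Real.rpow_pos_of_pos hε _) (Real.rpow_pos_of_pos (hKpos a ha) _))
  have hlogα : ∀ a ∈ Icc Kminus Kplus, Real.log (α a)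
      = Real.log (E a) + (5/3) * Real.log a - (2/3) * Real.log εbar := by
    intro a ha
    have ha0 : 0 < a := hKpos a ha
    show Real.log (E a / (εbar ^ ((2:ℝ)/3) * a ^ (-(5:ℝ)/3)))
      = Real.log (E a) + (5/3) * Real.log a - (2/3) * Real.log εbar
    rw [Real.log_div (hEpos a ha).ne'
        (mul_pos (Real.rpow_pos_of_pos hε _) (Real.rpow_pos_of_pos ha0 _)).ne',
      Real.log_mul (Real.rpow_pos_of_pos hε _).ne' (Real.rpow_pos_of_pos ha0 _).ne',
      Real.log_rpow hε, Real.log_rpow ha0]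
    ring
  -- Re^(3γ/4) as exponential
  have hRe : Re ^ (3 * γ / 4) = Real.exp (γ * (Real.log Kplus - Real.log Kminus)) := by
    show ((Kplus / Kminus) ^ ((4:ℝ)/3)) ^ (3 * γ / 4) = _
    rw [← Real.rpow_mul hr.le]
    have : (4:ℝ)/3 * (3 * γ / 4) = γ := by ring
    rw [this, Real.rpow_def_of_pos hr, Real.log_div (hK.trans hKK).ne' hK.ne']
    ring_nf
  -- key upper bound
  have key : ∀ a ∈ Icc Kminus Kplus, ∀ b ∈ Icc Kminus Kplus,
      α a / α b ≤ Re ^ (3 * γ / 4) := by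
    intro a ha b hb
    have hdiffbound : Real.log (α a) - Real.log (α b)
        ≤ γ * (Real.log Kplus - Real.log Kminus) := by
      rw [hlogα a ha, hlogα b hb]
      have hlogab : Real.log a ≤ Real.log Kplus ∧ Real.log Kminus ≤ Real.log a :=
        ⟨Real.log_le_log (hKpos a ha) ha.2, Real.log_le_log hK ha.1⟩
      have hlogba : Real.log b ≤ Real.log Kplus ∧ Real.log Kminus ≤ Real.log b :=
        ⟨Real.log_le_log (hKpos b hb) hb.2, Real.log_le_log hK hb.1⟩
      rcases le_total a b with hab | hab
      · have hu := monoU ha hb hab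
        simp only at hu
        nlinarith [hlogab.1, hlogab.2, hlogba.1, hlogba.2]
      · have hv := monoV hb ha hab
        simp only at hv
        nlinarith [hlogab.1, hlogab.2, hlogba.1, hlogba.2]
    have heq : α a / α b = Real.exp (Real.log (α a) - Real.log (α b)) := by
      rw [← Real.log_div (hαpos a ha).ne' (hαpos b hb).ne',
        Real.exp_log (div_pos (hαpos a ha) (hαpos b hb))]
    rw [heq, hRe]
    exact Real.exp_le_exp.2 hdiffbound
  intro K hK1 K' hK2
  refine ⟨?_, key K hK1 K' hK2⟩
  have h1 : α K' / α K ≤ Re ^ (3 * γ / 4) := key K' hK2 K hK1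
  have hpos : 0 < α K' / α K := div_pos (hαpos K' hK2) (hαpos K hK1)
  have hReneg : Re ^ (-(3 * γ) / 4) = (Re ^ (3 * γ / 4))⁻¹ := by
    rw [← Real.rpow_neg (Real.rpow_pos_of_pos hr _).le]
    congr 1
    ring
  rw [hReneg]
  have : α K / α K' = (α K' / α K)⁻¹ := by
    rw [inv_div]
  rw [this]
  exact inv_anti₀ hpos h1
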